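/- Let G be a finite simple graph and let W be a non-empty module of G such that W is a clique and such that any two distinct max cliques of G that intersect W have different intersections with W (i.e. if C ≠ C' are max cliques with C ∩ W ≠ ∅ and C' ∩ W ≠ ∅, then C ∩ W ≠ C' ∩ W). Then there is exactly one max clique C of G with C ∩ W ≠ ∅. -/

import Mathlib

/-- A max clique: an inclusion-maximal clique. -/
def IsMaxClique {V : Type} (G : SimpleGraph V) (s : Set V) : Prop :=
  G.IsClique s ∧ ∀ t : Set V, G.IsClique t → s ⊆ t → t = s

/-- A module of `G`: a set `W` of vertices such that every vertex outside `W` is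
adjacent either to all vertices of `W` or to none of them. -/
def IsModule {V : Type} (G : SimpleGraph V) (W : Set V) : Prop :=
  ∀ v : V, v ∉ W → (∀ w ∈ W, G.Adj v w) ∨ (∀ w ∈ W, ¬ G.Adj v w)

lemma maxClique_inter_module {V : Type} (G : SimpleGraph V) (W : Set V)
    (hW : IsModule G W) (hcl : G.IsClique W) (C : Set V) (hC : IsMaxClique G C)
    (hCW : (C ∩ W).Nonempty) : C ∩ W = W := by
  obtain ⟨v, hvC, hvW⟩ := hCW
  have hclique : G.IsClique (C ∪ W) := by
    intro x hx y hy hxy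
    rcases hx with hx | hx
    · rcases hy with hy | hy
      · exact hC.1 hx hy hxy
      · by_cases hxW : x ∈ W
        · exact hcl hxW hy hxy
        · rcases hW x hxW with h | h
          · exact h y hy
          · have hxv : x ≠ v := fun h' => hxW (h' ▸ hvW)
            exact absurd (hC.1 hx hvC hxv) (h v hvW)
    · rcases hy with hy | hy
      · by_cases hyW : y ∈ W
        · exact hcl hx hyW hxy
        · rcases hW y hyW with h | h
          · exact (h x hx).symm
          · have hyv : y ≠ v := fun h' => hyW (h' ▸ hvW)
            exact absurd (hC.1 hy hvC hyv) (fun hh => h v hvW hh)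
      · exact hcl hx hy hxy
  have := hC.2 (C ∪ W) hclique Set.subset_union_left
  have hWC : W ⊆ C := this ▸ Set.subset_union_right
  exact Set.inter_eq_right.mpr hWC

theorem clique_module_unique_maxClique {V : Type} [Fintype V] (G : SimpleGraph V)
    (W : Set V) (hW : IsModule G W) (hne : W.Nonempty) (hcl : G.IsClique W)
    (hdist : ∀ C C' : Set V, IsMaxClique G C → IsMaxClique G C' → C ≠ C' →
      (C ∩ W).Nonempty → (C' ∩ W).Nonempty → C ∩ W ≠ C' ∩ W) :
    ∃! C : Set V, IsMaxClique G C ∧ (C ∩ W).Nonempty := by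
  -- existence: extend W to a maximal clique
  have hfin : ({s : Set V | G.IsClique s ∧ W ⊆ s}).Finite := Set.toFinite _
  obtain ⟨M, hM, hmax'⟩ := Set.Finite.exists_maximal hfin ⟨W, hcl, subset_rfl⟩
  have hmax : ∀ t, t ∈ {s : Set V | G.IsClique s ∧ W ⊆ s} → M ⊆ t → M = t :=
    fun t ht hsub => le_antisymm hsub (hmax' ht hsub)
  have hMmax : IsMaxClique G M := by
    refine ⟨hM.1, fun t ht hsub => ?_⟩
    exact (hmax t ⟨ht, hM.2.trans hsub⟩ hsub).symm
  have hMW : (M ∩ W).Nonempty := by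
    obtain ⟨w, hw⟩ := hne
    exact ⟨w, hM.2 hw, hw⟩
  refine ⟨M, ⟨hMmax, hMW⟩, ?_⟩
  rintro C ⟨hC, hCW⟩
  by_contra hCM
  exact hdist C M hC hMmax hCM hCW hMW
    ((maxClique_inter_module G W hW hcl C hC hCW).trans
      (maxClique_inter_module G W hW hcl M hMmax hMW).symm)
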